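/- LRU caches satisfy the inclusion property: for capacities C₁ ≤ C₂, after processing any common access trace, the set of elements held by an LRU cache of capacity C₁ is a subset of the set held by an LRU cache of capacity C₂. Consequently, the number of misses of LRU is non-increasing in the cache capacity. -/
import Mathlib


/-- One access of an LRU cache of capacity `C`: the cache is a list with the
most recently used element first.  If `x` is present it is moved to the front;
otherwise it is inserted and, if the cache now exceeds `C` elements, the least
recently used element is evicted. -/
def lruStep {α : Type} [DecidableEq α] (C : ℕ) (cache : List α) (x : α) : List α :=
  if x ∈ cache then x :: cache.erase x else (x :: cache).take C

/-- The content of an LRU cache of capacity `C` after processing the trace `t`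
from the empty initial state. -/
def lruRun {α : Type} [DecidableEq α] (C : ℕ) (t : List α) : List α :=
  t.foldl (lruStep C) []

/-- The number of misses incurred by an LRU cache of capacity `C` with initial
content `cache` on the trace `t`. -/
def lruMisses {α : Type} [DecidableEq α] (C : ℕ) : List α → List α → ℕ
  | _, [] => 0
  | cache, x :: rest =>
      (if x ∈ cache then 0 else 1) + lruMisses C (lruStep C cache x) rest



section Aux
variable {α : Type} [DecidableEq α]

/-- The infinite-capacity "recency stack" step. -/
def stkStep (s : List α) (x : α) : List α := x :: s.erase x

lemma stk_nodup (s : List α) (hs : s.Nodup) (x : α) : (stkStep s x).Nodup := by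
  simp [stkStep, List.nodup_cons]
  exact ⟨fun h => (hs.mem_erase_iff.mp h).1 rfl, hs.erase x⟩

lemma erase_take_of_mem (x : α) : ∀ (l : List α) (n : ℕ), l.Nodup → x ∈ l.take n →
    (l.take n).erase x = (l.erase x).take (n - 1)
  | [], n, _, h => by simp at h
  | y :: l, 0, _, h => by simp at h
  | y :: l, n + 1, hnd, h => by
    by_cases hxy : x = y
    · subst hxy
      simp [List.erase_cons_head]
    · have hx : x ∈ l.take n := by
        rw [List.take_succ_cons, List.mem_cons] at h
        tauto
      have hn : 1 ≤ n := by
        have : n ≠ 0 := by rintro rfl; simp at hx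
        omega
      have ih := erase_take_of_mem x l n (List.nodup_cons.mp hnd).2 hx
      simp [List.take_succ_cons, List.erase_cons, hxy, Ne.symm hxy, ih]
      conv_rhs => rw [show n = (n - 1) + 1 from by omega]
      rw [List.take_succ_cons]

lemma take_erase_of_not_mem (x : α) : ∀ (l : List α) (n : ℕ), x ∉ l.take (n + 1) →
    (l.erase x).take n = l.take n
  | [], n, _ => by simp
  | y :: l, n, h => by
    simp [List.take_succ_cons] at h
    push_neg at h
    rw [List.erase_cons, if_neg (by simp; exact fun e => h.1 e.symm)]
    cases n with
    | zero => simp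
    | succ m =>
      rw [List.take_succ_cons, List.take_succ_cons,
        take_erase_of_not_mem x l m h.2]

lemma step_take (C : ℕ) (s : List α) (hs : s.Nodup) (x : α) :
    lruStep C (s.take C) x = (stkStep s x).take C := by
  unfold lruStep stkStep
  by_cases hx : x ∈ s.take C
  · rw [if_pos hx]
    have hC : 1 ≤ C := by
      cases C with
      | zero => simp at hx
      | succ k => omega
    rw [erase_take_of_mem x s C hs hx,
      show C = (C - 1) + 1 by omega, List.take_succ_cons]
    simp [show C - 1 + 1 - 1 = C - 1 by omega]
  · rw [if_neg hx]
    cases C with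
    | zero => simp
    | succ k =>
      rw [List.take_succ_cons, List.take_succ_cons, List.take_take,
        min_eq_left (by omega)]
      by_cases hxs : x ∈ s
      · rw [take_erase_of_not_mem x s k hx]
      · rw [List.erase_of_not_mem hxs]

lemma run_eq_take (C : ℕ) : ∀ (t : List α) (s : List α), s.Nodup →
    t.foldl (lruStep C) (s.take C) = (t.foldl stkStep s).take C
  | [], s, _ => by simp
  | x :: rest, s, hs => by
    rw [List.foldl_cons, List.foldl_cons, step_take C s hs x,
      run_eq_take C rest (stkStep s x) (stk_nodup s hs x)]

lemma misses_le (C₁ C₂ : ℕ) (hle : C₁ ≤ C₂) : ∀ (t : List α) (s : List α), s.Nodup →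
    lruMisses C₂ (s.take C₂) t ≤ lruMisses C₁ (s.take C₁) t
  | [], s, _ => le_refl _
  | x :: rest, s, hs => by
    rw [lruMisses, lruMisses, step_take C₁ s hs x, step_take C₂ s hs x]
    have hmem : x ∈ s.take C₁ → x ∈ s.take C₂ := fun h => by
      have : x ∈ (s.take C₂).take C₁ := by
        rwa [List.take_take, min_eq_left hle]
      exact List.take_subset _ _ this
    gcongr
    · split <;> split <;> simp_all
    · exact misses_le C₁ C₂ hle rest (stkStep s x) (stk_nodup s hs x)

end Aux

/-- the LRU inclusion property.  For capacities `C₁ ≤ C₂` and any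
common access trace processed from the empty state, the set of elements held by
the capacity-`C₁` LRU cache is a subset of that of the capacity-`C₂` cache;
consequently the number of LRU misses is non-increasing in the capacity. -/
theorem lru_inclusion {α : Type} [DecidableEq α] (C₁ C₂ : ℕ) (hle : C₁ ≤ C₂)
    (t : List α) :
    (∀ x : α, x ∈ lruRun C₁ t → x ∈ lruRun C₂ t) ∧
    lruMisses C₂ [] t ≤ lruMisses C₁ [] t := by
  constructor
  · intro x hx
    have h1 : lruRun C₁ t = (t.foldl stkStep []).take C₁ := by
      simpa [lruRun] using run_eq_take C₁ t [] List.nodup_nil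
    have h2 : lruRun C₂ t = (t.foldl stkStep []).take C₂ := by
      simpa [lruRun] using run_eq_take C₂ t [] List.nodup_nil
    rw [h1] at hx; rw [h2]
    have hx' : x ∈ ((t.foldl stkStep []).take C₂).take C₁ := by
      rwa [List.take_take, min_eq_left hle]
    exact List.take_subset _ _ hx'
  · simpa using misses_le C₁ C₂ hle t [] List.nodup_nil
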